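/- arXiv:2212.08389 — 3 statements merged into one kernel-verified Lean document; each statement's English description precedes it below -/
import Mathlib

section
/- Let H, Y be Hilbert spaces and B* : Y → H a bounded linear operator that is injective with dense range, such that the norm on Y equals ‖B*v‖_H. Then the bilinear form b(u,v) := ⟨u, B*v⟩_H on H × Y satisfies inf_{u≠0} sup_{v≠0} b(u,v)/(‖u‖_H ‖v‖_Y) = 1 and sup_{u≠0} sup_{v≠0} b(u,v)/(‖u‖_H ‖v‖_Y) = 1. -/
open scoped RealInnerProductSpace

lemma inner_sup_eq_one
    {H Y : Type*} [NormedAddCommGroup H] [InnerProductSpace ℝ H]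
    [NormedAddCommGroup Y] [InnerProductSpace ℝ Y] [Nontrivial Y]
    (Bs : Y →ₗ[ℝ] H) (hiso : ∀ v : Y, ‖Bs v‖ = ‖v‖)
    (hdense : DenseRange Bs) (u : H) (hu : u ≠ 0) :
    (⨆ v : {v : Y // v ≠ 0}, ⟪u, Bs (v : Y)⟫ / (‖u‖ * ‖(v : Y)‖)) = 1 := by
  have hune : Nonempty {v : Y // v ≠ 0} := by
    obtain ⟨y, hy⟩ := exists_ne (0 : Y)
    exact ⟨⟨y, hy⟩⟩
  have hupos : (0:ℝ) < ‖u‖ := norm_pos_iff.mpr hu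
  have hle : ∀ v : {v : Y // v ≠ 0}, ⟪u, Bs (v : Y)⟫ / (‖u‖ * ‖(v : Y)‖) ≤ 1 := by
    intro ⟨v, hv⟩
    have hvpos : (0:ℝ) < ‖v‖ := norm_pos_iff.mpr hv
    rw [div_le_one (by positivity)]
    calc ⟪u, Bs v⟫ ≤ ‖u‖ * ‖Bs v‖ := real_inner_le_norm u (Bs v)
      _ = ‖u‖ * ‖v‖ := by rw [hiso]
  have hbdd : BddAbove (Set.range fun v : {v : Y // v ≠ 0} =>
      ⟪u, Bs (v : Y)⟫ / (‖u‖ * ‖(v : Y)‖)) := by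
    refine ⟨1, ?_⟩
    rintro x ⟨v, rfl⟩
    exact hle v
  have hge : ∀ ε : ℝ, 0 < ε → ε < 1 →
      (1 - ε : ℝ) ≤ ⨆ v : {v : Y // v ≠ 0}, ⟪u, Bs (v : Y)⟫ / (‖u‖ * ‖(v : Y)‖) := by
    intro ε hε hε1
    set δ := ε * ‖u‖ / 2 with hδdef
    have hδpos : 0 < δ := by positivity
    have hδlt : δ < ‖u‖ := by
      rw [hδdef]; nlinarith
    obtain ⟨v, hv⟩ := Metric.denseRange_iff.mp hdense u δ hδpos
    rw [dist_eq_norm] at hv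
    have hvne : v ≠ 0 := by
      rintro rfl
      simp only [map_zero, sub_zero] at hv
      linarith
    have hvpos : (0:ℝ) < ‖v‖ := norm_pos_iff.mpr hvne
    have hnum : ‖u‖ * ‖u‖ - ‖u‖ * δ ≤ ⟪u, Bs v⟫ := by
      have h1 : ⟪u, u - Bs v⟫ ≤ ‖u‖ * ‖u - Bs v‖ := real_inner_le_norm _ _
      have h2 : ‖u‖ * ‖u - Bs v‖ ≤ ‖u‖ * δ := by
        apply mul_le_mul_of_nonneg_left (le_of_lt hv) (le_of_lt hupos)
      have h3 : ⟪u, Bs v⟫ = ⟪u, u⟫ - ⟪u, u - Bs v⟫ := by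
        rw [inner_sub_right]; ring
      rw [h3, real_inner_self_eq_norm_mul_norm]
      linarith
    have hden : ‖v‖ ≤ ‖u‖ + δ := by
      have : ‖Bs v‖ ≤ ‖u‖ + ‖u - Bs v‖ := by
        have := norm_sub_norm_le u (Bs v)
        linarith [abs_le.mp (abs_norm_sub_norm_le u (Bs v))]
      rw [hiso] at this
      linarith
    have key : (1 - ε : ℝ) ≤ ⟪u, Bs v⟫ / (‖u‖ * ‖v‖) := by
      rw [le_div_iff₀ (by positivity)]
      have : (1 - ε) * (‖u‖ * ‖v‖) ≤ (1 - ε) * (‖u‖ * (‖u‖ + δ)) := by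
        apply mul_le_mul_of_nonneg_left _ (by linarith)
        exact mul_le_mul_of_nonneg_left hden (le_of_lt hupos)
      have hexp : (1 - ε) * (‖u‖ * (‖u‖ + δ)) ≤ ‖u‖ * ‖u‖ - ‖u‖ * δ := by
        rw [hδdef]; nlinarith
      linarith
    exact le_trans key (le_ciSup hbdd ⟨v, hvne⟩)
  refine le_antisymm (ciSup_le hle) ?_
  by_contra h
  push_neg at h
  set S := ⨆ v : {v : Y // v ≠ 0}, ⟪u, Bs (v : Y)⟫ / (‖u‖ * ‖(v : Y)‖)
  have hS1 : S < 1 := h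
  have hε : 0 < (1 - S) / 2 := by linarith
  have hε1 : (1 - S) / 2 < 1 := by
    have : (0:ℝ) < S + 1 := by
      have := hge (1/2) (by norm_num) (by norm_num)
      linarith
    linarith
  have := hge ((1 - S) / 2) hε hε1
  linarith

/-- For `B* : Y → H` a linear isometry (injective with dense range),
the bilinear form `b(u,v) = ⟨u, B*v⟩_H` has inf-sup and continuity constants equal to 1. -/
theorem stmt_1
    {H Y : Type*} [NormedAddCommGroup H] [InnerProductSpace ℝ H] [CompleteSpace H]
    [NormedAddCommGroup Y] [InnerProductSpace ℝ Y] [CompleteSpace Y]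
    [Nontrivial H] [Nontrivial Y]
    (Bs : Y →ₗ[ℝ] H) (hiso : ∀ v : Y, ‖Bs v‖ = ‖v‖)
    (hinj : Function.Injective Bs) (hdense : DenseRange Bs) :
    (⨅ u : {u : H // u ≠ 0}, ⨆ v : {v : Y // v ≠ 0},
        ⟪(u : H), Bs (v : Y)⟫ / (‖(u : H)‖ * ‖(v : Y)‖)) = 1 ∧
    (⨆ u : {u : H // u ≠ 0}, ⨆ v : {v : Y // v ≠ 0},
        ⟪(u : H), Bs (v : Y)⟫ / (‖(u : H)‖ * ‖(v : Y)‖)) = 1 := by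
  have hne : Nonempty {u : H // u ≠ 0} := by
    obtain ⟨x, hx⟩ := exists_ne (0 : H)
    exact ⟨⟨x, hx⟩⟩
  have hconst : ∀ u : {u : H // u ≠ 0},
      (⨆ v : {v : Y // v ≠ 0}, ⟪(u : H), Bs (v : Y)⟫ / (‖(u : H)‖ * ‖(v : Y)‖)) = 1 :=
    fun u => inner_sup_eq_one Bs hiso hdense u u.2
  constructor
  · rw [iInf_congr hconst]; exact ciInf_const
  · rw [iSup_congr hconst]; exact ciSup_const
end

section
/- Let H, Y be Hilbert spaces and B* : Y → H an isometric isomorphism onto a dense subspace of H, with b(u,v) := ⟨u, B*v⟩_H. Then for every f ∈ Y' there exists a unique u ∈ H such that b(u,v) = f(v) for all v ∈ Y. -/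
open scoped RealInnerProductSpace

/-- Ultra-weak well-posedness: for `B* : Y → H` a linear isometry with dense
range, for every `f ∈ Y'` there is a unique `u ∈ H` with `⟨u, B*v⟩ = f(v)` for all `v`. -/
theorem stmt_2
    {H Y : Type*} [NormedAddCommGroup H] [InnerProductSpace ℝ H] [CompleteSpace H]
    [NormedAddCommGroup Y] [InnerProductSpace ℝ Y] [CompleteSpace Y]
    (Bs : Y →ₗ[ℝ] H) (hiso : ∀ v : Y, ‖Bs v‖ = ‖v‖)
    (hinj : Function.Injective Bs) (hdense : DenseRange Bs)
    (f : Y →L[ℝ] ℝ) :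
    ∃! u : H, ∀ v : Y, ⟪u, Bs v⟫ = f v := by
  set Bi : Y →ₗᵢ[ℝ] H := ⟨Bs, hiso⟩ with hBi
  have hclosed : IsClosed (Set.range Bi) := Bi.isometry.isClosedEmbedding.isClosed_range
  have hsurj : Function.Surjective Bi := by
    intro h
    have : h ∈ closure (Set.range Bi) := hdense h
    rw [hclosed.closure_eq] at this
    exact this
  set e : Y ≃ₗᵢ[ℝ] H := LinearIsometryEquiv.ofSurjective Bi hsurj with he
  set g : H →L[ℝ] ℝ := f.comp (e.symm.toContinuousLinearEquiv : H ≃L[ℝ] Y).toContinuousLinearMap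
  refine ⟨(InnerProductSpace.toDual ℝ H).symm g, fun v => ?_, fun u' hu' => ?_⟩
  · have hBv : Bs v = e v := rfl
    rw [hBv, InnerProductSpace.toDual_symm_apply]
    simp [g]
  · have h0 : ∀ v : Y, ⟪u' - (InnerProductSpace.toDual ℝ H).symm g, Bs v⟫ = 0 := by
      intro v
      have h2 : ⟪(InnerProductSpace.toDual ℝ H).symm g, Bs v⟫ = f v := by
        have hBv : Bs v = e v := rfl
        rw [hBv, InnerProductSpace.toDual_symm_apply]
        simp [g]
      rw [inner_sub_left, hu' v, h2, sub_self]
    have : ∀ h : H, ⟪u' - (InnerProductSpace.toDual ℝ H).symm g, h⟫ = 0 := by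
      intro h
      obtain ⟨v, rfl⟩ := hsurj h
      exact h0 v
    have h3 : u' - (InnerProductSpace.toDual ℝ H).symm g = 0 :=
      inner_self_eq_zero.mp (this (u' - (InnerProductSpace.toDual ℝ H).symm g))
    exact sub_eq_zero.mp h3
end

section
/- Under the ultra-weak well-posedness setting (inf-sup and continuity constants both equal to 1), for the exact solution u ∈ H of b(u,v) = f(v) for all v ∈ Y and any approximation w ∈ H, the error equals the dual norm of the residual: ‖u - w‖_H = ‖f - B w‖_{Y'}, where (Bw)(v) := b(w,v). -/
open scoped RealInnerProductSpace

/-- Error-residual identity in the ultra-weak setting: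
`‖u - w‖_H = ‖f - Bw‖_{Y'}` where `(Bw)(v) = b(w,v) = ⟨w, B*v⟩`. -/
theorem stmt_3
    {H Y : Type*} [NormedAddCommGroup H] [InnerProductSpace ℝ H] [CompleteSpace H]
    [NormedAddCommGroup Y] [InnerProductSpace ℝ Y] [CompleteSpace Y]
    (Bs : Y →L[ℝ] H) (hiso : ∀ v : Y, ‖Bs v‖ = ‖v‖)
    (hinj : Function.Injective Bs) (hdense : DenseRange Bs)
    (B : H →L[ℝ] (Y →L[ℝ] ℝ)) (hB : ∀ (w : H) (v : Y), B w v = ⟪w, Bs v⟫)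
    (f : Y →L[ℝ] ℝ) (u : H) (hu : ∀ v : Y, ⟪u, Bs v⟫ = f v) (w : H) :
    ‖u - w‖ = ‖f - B w‖ := by
  set x := u - w with hx
  have hg : ∀ v : Y, (f - B w) v = ⟪x, Bs v⟫ := by
    intro v
    simp [hB, ← hu v, hx, inner_sub_left]
  -- Bs is an isometry, hence has closed range; dense range gives surjectivity
  have hisom : Isometry Bs := AddMonoidHomClass.isometry_of_norm Bs hiso
  have hsurj : Function.Surjective Bs := by
    have hclosed : IsClosed (Set.range Bs) :=
      (hisom.isClosedEmbedding).isClosed_range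
    intro y
    have : y ∈ closure (Set.range Bs) := hdense y
    rwa [hclosed.closure_eq] at this
  apply le_antisymm
  · obtain ⟨v, hv⟩ := hsurj x
    have h1 : (f - B w) v = ‖x‖ ^ 2 := by
      rw [hg v, hv, real_inner_self_eq_norm_sq]
    have h2 : ‖x‖ ^ 2 ≤ ‖f - B w‖ * ‖x‖ := by
      calc ‖x‖ ^ 2 = (f - B w) v := h1.symm
        _ ≤ ‖(f - B w) v‖ := le_abs_self _
        _ ≤ ‖f - B w‖ * ‖v‖ := (f - B w).le_opNorm v
        _ = ‖f - B w‖ * ‖x‖ := by rw [← hiso v, hv]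
    nlinarith [norm_nonneg x, norm_nonneg (f - B w)]
  · apply ContinuousLinearMap.opNorm_le_bound _ (norm_nonneg x)
    intro v
    rw [hg v]
    calc ‖⟪x, Bs v⟫‖ ≤ ‖x‖ * ‖Bs v‖ := norm_inner_le_norm _ _
      _ = ‖x‖ * ‖v‖ := by rw [hiso]
end
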